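/- arXiv:2003.09576 — 7 statements merged into one kernel-verified Lean document; each statement's English description precedes it below -/
import Mathlib

section
/- For every ε > 0 and every 1 < p < ∞ with conjugate exponent q (i.e. 1/p + 1/q = 1), there exist a natural number N and a decreasing sequence of positive reals a_1 ≥ a_2 ≥ ... ≥ a_N > 0 such that ∑_{n=1}^N a_n > ε^{-2} and ∑_{n=1}^N (∑_{j=n}^N a_j^q)^{p/q} < ε^p. -/
open Finset

-- MVT step: (q-1) * (x+1)^(-q) ≤ x^(1-q) - (x+1)^(1-q) for x ≥ 1
lemma keyB (q : ℝ) (hq : 1 < q) (x : ℝ) (hx : 1 ≤ x) :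
    (q - 1) * (x + 1) ^ (-q) ≤ x ^ (1 - q) - (x + 1) ^ (1 - q) := by
  have hx0 : (0:ℝ) < x := lt_of_lt_of_le one_pos hx
  obtain ⟨c, hc, hceq⟩ := exists_hasDerivAt_eq_slope (fun t : ℝ => t ^ (1 - q))
      (fun t : ℝ => (1 - q) * t ^ (-q)) (by linarith : x < x + 1)
      (by
        apply ContinuousOn.rpow_const continuousOn_id
        intro t ht
        exact Or.inl (ne_of_gt (lt_of_lt_of_le hx0 ht.1)))
      (by
        intro t ht
        have ht0 : t ≠ 0 := ne_of_gt (lt_trans hx0 ht.1)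
        have := Real.hasDerivAt_rpow_const (p := 1 - q) (Or.inl ht0)
        convert this using 1
        ring_nf)
  have h1 : (x + 1) - x = 1 := by ring
  rw [h1, div_one] at hceq
  have hc1 : c ≤ x + 1 := le_of_lt hc.2
  have hc0 : 0 < c := lt_trans hx0 hc.1
  have hmono : (x + 1) ^ (-q) ≤ c ^ (-q) :=
    Real.rpow_le_rpow_of_nonpos hc0 hc1 (by linarith)
  have heq : x ^ (1 - q) - (x + 1) ^ (1 - q) = (q - 1) * c ^ (-q) := by
    have := hceq
    nlinarith [this]
  rw [heq]
  have : (0:ℝ) ≤ q - 1 := by linarith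
  nlinarith [hmono]

-- tail bound
lemma tail_bound (p q : ℝ) (hq : 1 < q) (hpq : p = q / (q - 1)) (n N : ℕ) (hn : 1 ≤ n) :
    ∑ j ∈ Icc n N, ((j : ℝ)) ^ (-q) ≤ p * (n : ℝ) ^ (1 - q) := by
  have hq1 : (0:ℝ) < q - 1 := by linarith
  have hn1 : (1:ℝ) ≤ (n:ℝ) := by exact_mod_cast hn
  have hn0 : (0:ℝ) < (n:ℝ) := by linarith
  have hp0 : 0 < p := by rw [hpq]; positivity
  by_cases hnN : n ≤ N
  · rw [Finset.Icc_eq_cons_Ioc hnN, Finset.sum_cons, ← Finset.Icc_add_one_left_eq_Ioc]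
    have htail : ∑ j ∈ Icc (n+1) N, ((j : ℝ)) ^ (-q)
        ≤ (1 / (q - 1)) * (n : ℝ) ^ (1 - q) := by
      have hIcc : Icc (n+1) N = Ico (n+1) (N+1) := by
        rw [Finset.Ico_add_one_right_eq_Icc]
      rw [hIcc, Finset.sum_Ico_eq_sum_range]
      have hstep : ∀ i ∈ Finset.range (N + 1 - (n + 1)),
          ((n + 1 + i : ℕ) : ℝ) ^ (-q)
            ≤ (1 / (q - 1)) * (((n + i : ℕ) : ℝ) ^ (1 - q) - ((n + (i+1) : ℕ) : ℝ) ^ (1 - q)) := by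
        intro i _
        have hx : (1:ℝ) ≤ ((n + i : ℕ) : ℝ) := by
          have : (1:ℕ) ≤ n + i := le_add_right hn
          exact_mod_cast this
        have := keyB q hq ((n + i : ℕ) : ℝ) hx
        have hcast1 : ((n + 1 + i : ℕ) : ℝ) = ((n + i : ℕ) : ℝ) + 1 := by push_cast; ring
        have hcast2 : ((n + (i+1) : ℕ) : ℝ) = ((n + i : ℕ) : ℝ) + 1 := by push_cast; ring
        rw [hcast1, hcast2]
        rw [div_mul_eq_mul_div, le_div_iff₀ hq1, mul_comm]
        linarith
      calc ∑ i ∈ Finset.range (N + 1 - (n + 1)), ((n + 1 + i : ℕ) : ℝ) ^ (-q)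
          ≤ ∑ i ∈ Finset.range (N + 1 - (n + 1)),
              (1 / (q - 1)) * (((n + i : ℕ) : ℝ) ^ (1 - q) - ((n + (i+1) : ℕ) : ℝ) ^ (1 - q)) :=
            Finset.sum_le_sum hstep
        _ = (1 / (q - 1)) * (((n + 0 : ℕ) : ℝ) ^ (1 - q)
              - ((n + (N + 1 - (n + 1)) : ℕ) : ℝ) ^ (1 - q)) := by
            rw [← Finset.mul_sum, Finset.sum_range_sub' (fun i => ((n + i : ℕ) : ℝ) ^ (1 - q))]
        _ ≤ (1 / (q - 1)) * (n : ℝ) ^ (1 - q) := by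
            have h1 : (0:ℝ) ≤ ((n + (N + 1 - (n + 1)) : ℕ) : ℝ) ^ (1 - q) :=
              Real.rpow_nonneg (Nat.cast_nonneg _) _
            have h2 : ((n + 0 : ℕ) : ℝ) = (n : ℝ) := by norm_num
            rw [h2]
            have h3 : (0:ℝ) < 1 / (q - 1) := by positivity
            nlinarith
    have hfirst : (n : ℝ) ^ (-q) ≤ (n : ℝ) ^ (1 - q) :=
      Real.rpow_le_rpow_of_exponent_le hn1 (by linarith)
    have hpsum : 1 + 1 / (q - 1) = p := by rw [hpq]; field_simp; ring
    calc (n : ℝ) ^ (-q) + ∑ j ∈ Icc (n+1) N, ((j : ℝ)) ^ (-q)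
        ≤ (n : ℝ) ^ (1 - q) + (1 / (q - 1)) * (n : ℝ) ^ (1 - q) := by
          exact add_le_add hfirst htail
      _ = (1 + 1 / (q - 1)) * (n : ℝ) ^ (1 - q) := by ring
      _ = p * (n : ℝ) ^ (1 - q) := by rw [hpsum]
  · rw [Finset.Icc_eq_empty (by omega), Finset.sum_empty]
    positivity

theorem stmt0 (ε p q : ℝ) (hε : 0 < ε) (hp : 1 < p) (hq : 1 < q)
    (hpq : 1 / p + 1 / q = 1) :
    ∃ (N : ℕ) (a : ℕ → ℝ), 0 < N ∧
      (∀ n, 1 ≤ n → n ≤ N → 0 < a n) ∧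
      (∀ m n, 1 ≤ m → m ≤ n → n ≤ N → a n ≤ a m) ∧
      (∑ n ∈ Icc 1 N, a n > ε ^ (-2 : ℝ)) ∧
      (∑ n ∈ Icc 1 N, (∑ j ∈ Icc n N, a j ^ q) ^ (p / q) < ε ^ p) := by
  have hp0 : (0:ℝ) < p := by linarith
  have hq0 : (0:ℝ) < q := by linarith
  have hq1 : (0:ℝ) < q - 1 := by linarith
  have hsum : p + q = p * q := by
    field_simp at hpq
    linarith
  have hpq' : p = q / (q - 1) := by
    rw [eq_div_iff (by linarith)]
    nlinarith
  have hexp1 : q * (p / q) = p := by field_simp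
  have hexp2 : (1 - q) * (p / q) = -1 := by
    field_simp
    nlinarith
  -- the target bound constant
  set B : ℝ := (2 * ε ^ (-2:ℝ)) ^ p * p ^ (p / q) / ε ^ p with hB
  have hB0 : 0 < B := by positivity
  set M : ℝ := max 1 (B ^ (1 / (p - 1))) with hM
  -- choose N with harmonic sum > M
  obtain ⟨N, hN⟩ := (Real.tendsto_sum_range_one_div_nat_succ_atTop.eventually_gt_atTop M).exists
  set H : ℝ := ∑ n ∈ Icc 1 N, (1 : ℝ) / n with hHdef
  have hHeq : H = ∑ i ∈ Finset.range N, (1:ℝ) / (i + 1) := by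
    rw [hHdef, ← Finset.Ico_add_one_right_eq_Icc, Finset.sum_Ico_eq_sum_range]
    rw [show N + 1 - 1 = N from rfl]
    apply Finset.sum_congr rfl
    intro i _
    push_cast
    ring
  have hHM : M < H := by rw [hHeq]; exact hN
  have hH1 : 1 < H := lt_of_le_of_lt (le_max_left _ _) hHM
  have hH0 : 0 < H := by linarith
  have hHB : B < H ^ (p - 1) := by
    have h1 : B ^ (1 / (p - 1)) < H := lt_of_le_of_lt (le_max_right _ _) hHM
    have h2 : (B ^ (1 / (p - 1))) ^ (p - 1) < H ^ (p - 1) :=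
      Real.rpow_lt_rpow (Real.rpow_nonneg hB0.le _) h1 (by linarith)
    rwa [← Real.rpow_mul hB0.le, one_div_mul_cancel (by linarith : p - 1 ≠ 0),
      Real.rpow_one] at h2
  have hN0 : 0 < N := by
    rcases Nat.eq_zero_or_pos N with h | h
    · exfalso
      subst h
      simp only [Finset.range_zero, Finset.sum_empty] at hN
      have h1 : (1:ℝ) ≤ M := le_max_left _ _
      linarith
    · exact h
  set c : ℝ := 2 * ε ^ (-2:ℝ) / H with hc
  have hc0 : 0 < c := by positivity
  refine ⟨N, fun n => c / n, hN0, ?_, ?_, ?_, ?_⟩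
  · intro n hn _
    have : (0:ℝ) < n := by exact_mod_cast hn
    positivity
  · intro m n hm hmn _
    have hm0 : (0:ℝ) < m := by exact_mod_cast hm
    have hmn' : (m:ℝ) ≤ n := by exact_mod_cast hmn
    have hn0 : (0:ℝ) < n := by linarith
    rw [div_le_div_iff₀ hn0 hm0]
    nlinarith
  · have hsum1 : ∑ n ∈ Icc 1 N, c / (n:ℝ) = c * H := by
      rw [hHdef, Finset.mul_sum]
      apply Finset.sum_congr rfl
      intro n _
      rw [mul_one_div]
    rw [hsum1, hc, div_mul_cancel₀ _ (ne_of_gt hH0)]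
    have : 0 < ε ^ (-2:ℝ) := Real.rpow_pos_of_pos hε _
    linarith
  · -- main estimate
    have hterm : ∀ n ∈ Icc 1 N,
        (∑ j ∈ Icc n N, (c / (j:ℝ)) ^ q) ^ (p / q) ≤ c ^ p * p ^ (p / q) * (1 / (n:ℝ)) := by
      intro n hn
      rw [Finset.mem_Icc] at hn
      have hn1 : (1:ℝ) ≤ (n:ℝ) := by exact_mod_cast hn.1
      have hn0 : (0:ℝ) < (n:ℝ) := by linarith
      have hinner : ∑ j ∈ Icc n N, (c / (j:ℝ)) ^ q ≤ c ^ q * (p * (n:ℝ) ^ (1 - q)) := by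
        have heq : ∀ j ∈ Icc n N, (c / (j:ℝ)) ^ q = c ^ q * ((j:ℝ)) ^ (-q) := by
          intro j hj
          rw [Finset.mem_Icc] at hj
          rw [Real.div_rpow hc0.le (Nat.cast_nonneg j), Real.rpow_neg (Nat.cast_nonneg j),
            div_eq_mul_inv]
        rw [Finset.sum_congr rfl heq, ← Finset.mul_sum]
        have := tail_bound p q hq hpq' n N hn.1
        have hcq : (0:ℝ) < c ^ q := Real.rpow_pos_of_pos hc0 _
        nlinarith
      have hinner0 : (0:ℝ) ≤ ∑ j ∈ Icc n N, (c / (j:ℝ)) ^ q := by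
        apply Finset.sum_nonneg
        intro j _
        exact Real.rpow_nonneg (by positivity) _
      calc (∑ j ∈ Icc n N, (c / (j:ℝ)) ^ q) ^ (p / q)
          ≤ (c ^ q * (p * (n:ℝ) ^ (1 - q))) ^ (p / q) :=
            Real.rpow_le_rpow hinner0 hinner (by positivity)
        _ = c ^ p * p ^ (p / q) * (1 / (n:ℝ)) := by
            rw [Real.mul_rpow (Real.rpow_nonneg hc0.le _) (by positivity),
              Real.mul_rpow hp0.le (Real.rpow_nonneg hn0.le _),
              ← Real.rpow_mul hc0.le, ← Real.rpow_mul hn0.le, hexp1, hexp2,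
              Real.rpow_neg_one]
            rw [one_div]
            ring
    have houter : ∑ n ∈ Icc 1 N, (∑ j ∈ Icc n N, (c / (j:ℝ)) ^ q) ^ (p / q)
        ≤ c ^ p * p ^ (p / q) * H := by
      calc ∑ n ∈ Icc 1 N, (∑ j ∈ Icc n N, (c / (j:ℝ)) ^ q) ^ (p / q)
          ≤ ∑ n ∈ Icc 1 N, c ^ p * p ^ (p / q) * (1 / (n:ℝ)) := Finset.sum_le_sum hterm
        _ = c ^ p * p ^ (p / q) * H := by
            rw [hHdef, Finset.mul_sum]
    have hfinal : c ^ p * p ^ (p / q) * H < ε ^ p := by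
      have hcp : c ^ p = (2 * ε ^ (-2:ℝ)) ^ p / H ^ p := by
        rw [hc, Real.div_rpow (by positivity) hH0.le]
      rw [hcp]
      have hHp : 0 < H ^ (p - 1) := Real.rpow_pos_of_pos hH0 _
      have hHpp : 0 < H ^ p := Real.rpow_pos_of_pos hH0 _
      have hHratio : H / H ^ p = (H ^ (p-1))⁻¹ := by
        rw [show H / H ^ p = H ^ (1:ℝ) / H ^ p by rw [Real.rpow_one],
          ← Real.rpow_sub hH0, show (1:ℝ) - p = -(p-1) by ring, Real.rpow_neg hH0.le]
      have hεp : 0 < ε ^ p := Real.rpow_pos_of_pos hε _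
      have hX : (2 * ε ^ (-2:ℝ)) ^ p * p ^ (p / q) = B * ε ^ p :=
        (div_mul_cancel₀ _ hεp.ne').symm
      have h1 : B * (H ^ (p-1))⁻¹ < 1 := by
        rw [← div_eq_mul_inv, div_lt_one hHp]
        exact hHB
      calc (2 * ε ^ (-2:ℝ)) ^ p / H ^ p * p ^ (p / q) * H
          = (2 * ε ^ (-2:ℝ)) ^ p * p ^ (p / q) * (H / H ^ p) := by ring
        _ = B * ε ^ p * (H ^ (p-1))⁻¹ := by rw [hHratio, hX]
        _ = (B * (H ^ (p-1))⁻¹) * ε ^ p := by ring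
        _ < 1 * ε ^ p := mul_lt_mul_of_pos_right h1 hεp
        _ = ε ^ p := one_mul _
    calc ∑ n ∈ Icc 1 N, (∑ j ∈ Icc n N, (c / (j:ℝ)) ^ q) ^ (p / q)
        ≤ c ^ p * p ^ (p / q) * H := houter
      _ < ε ^ p := hfinal
end

section
/- Let 1 < p < ∞ and q satisfy 1/p + 1/q = 1. Then the improper integral ∫_1^∞ (∫_x^∞ ((t+1)ln(t+1))^{-q} dt)^{p/q} dx is finite; in fact it is at most (q-1)^{-p/q} (p-1)^{-1} (ln 2)^{1-p}. -/
open MeasureTheory Real Set Filter Topology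

-- antiderivative computation for (t+1)^(-q) on Ioi x
lemma aux_int_shift (q : ℝ) (hq : 1 < q) (x : ℝ) (hx : 0 < x) :
    IntegrableOn (fun t : ℝ => (t + 1) ^ (-q)) (Ioi x) ∧
      ∫ t in Ioi x, (t + 1) ^ (-q) = (x + 1) ^ (1 - q) / (q - 1) := by
  set g : ℝ → ℝ := fun t => -((t + 1) ^ (1 - q)) / (q - 1) with hg
  have hderiv : ∀ t ∈ Ici x, HasDerivAt g ((t + 1) ^ (-q)) t := by
    intro t ht
    have ht1 : (0:ℝ) < t + 1 := by
      have := ht.out; linarith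
    have h1 : HasDerivAt (fun y : ℝ => y + 1) 1 t := (hasDerivAt_id t).add_const 1
    have h2 := h1.rpow_const (p := 1 - q) (Or.inl ht1.ne')
    have h3 := (h2.neg).div_const (q - 1)
    convert h3 using 1
    · rfl
    · rfl
    · rfl
    have : (1:ℝ) - q - 1 = -q := by ring
    rw [this, eq_div_iff (by intro h; apply absurd h; intro h2; linarith : q - 1 ≠ 0)]
    ring
  have hpos : ∀ t ∈ Ioi x, (0:ℝ) ≤ (t + 1) ^ (-q) := by
    intro t ht
    exact Real.rpow_nonneg (by have := ht.out; linarith) _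
  have htend : Tendsto g atTop (𝓝 0) := by
    have h0 : Tendsto (fun t : ℝ => (t + 1) ^ (1 - q)) atTop (𝓝 0) := by
      have hb : Tendsto (fun t : ℝ => t + 1) atTop atTop :=
        tendsto_atTop_add_const_right _ 1 tendsto_id
      have := (tendsto_rpow_neg_atTop (by linarith : (0:ℝ) < q - 1)).comp hb
      simpa [neg_sub, Function.comp_def] using this
    have := (h0.neg).div_const (q - 1)
    simpa using this
  refine ⟨integrableOn_Ioi_deriv_of_nonneg' hderiv hpos htend, ?_⟩
  rw [integral_Ioi_of_hasDerivAt_of_nonneg' hderiv hpos htend]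
  simp only [hg]
  field_simp
  ring

theorem stmt1 (p q : ℝ) (hp : 1 < p) (hq : 1 < q) (hpq : 1 / p + 1 / q = 1) :
    ∫⁻ x in Set.Ioi (1 : ℝ),
        ENNReal.ofReal ((∫ t in Set.Ioi x, ((t + 1) * Real.log (t + 1)) ^ (-q)) ^ (p / q))
      ≤ ENNReal.ofReal ((q - 1) ^ (-(p / q)) * (p - 1)⁻¹ * (Real.log 2) ^ (1 - p)) := by
  have hp0 : (0:ℝ) < p := by linarith
  have hq0 : (0:ℝ) < q := by linarith
  have hsum : p + q = p * q := by field_simp at hpq; linarith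
  have hpq' : p / q = p - 1 := by field_simp; linarith
  have hlog2 : (0:ℝ) < Real.log 2 := Real.log_pos one_lt_two
  set C : ℝ := (q - 1) ^ (-(p / q)) with hC
  have hq1 : (0:ℝ) < q - 1 := by linarith
  have hCpos : 0 < C := Real.rpow_pos_of_pos hq1 _
  set F : ℝ → ℝ := fun x => ∫ t in Ioi x, ((t + 1) * Real.log (t + 1)) ^ (-q) with hF
  set G : ℝ → ℝ := fun x => C * ((x + 1)⁻¹ * Real.log (x + 1) ^ (-p)) with hG
  -- Step 1: pointwise bound F x ≤ B x for x > 1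
  have hFnonneg : ∀ x : ℝ, 1 < x → 0 ≤ F x := by
    intro x hx
    apply setIntegral_nonneg measurableSet_Ioi
    intro t ht
    have ht1 : (1:ℝ) < t + 1 := by have := ht.out; linarith
    exact Real.rpow_nonneg (mul_nonneg (by linarith) (Real.log_nonneg ht1.le)) _
  have hFB : ∀ x : ℝ, 1 < x →
      F x ≤ Real.log (x + 1) ^ (-q) * ((x + 1) ^ (1 - q) / (q - 1)) := by
    intro x hx
    have hx1 : (0:ℝ) < x := by linarith
    obtain ⟨hint, hval⟩ := aux_int_shift q hq x hx1
    have hlx : 0 < Real.log (x + 1) := Real.log_pos (by linarith)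
    have hmono : ∀ t ∈ Ioi x, ((t + 1) * Real.log (t + 1)) ^ (-q)
        ≤ Real.log (x + 1) ^ (-q) * (t + 1) ^ (-q) := by
      intro t ht
      have htx : x < t := ht.out
      have ht1 : (0:ℝ) < t + 1 := by linarith
      have hlt : Real.log (x + 1) ≤ Real.log (t + 1) :=
        Real.log_le_log (by linarith) (by linarith)
      rw [Real.mul_rpow ht1.le (Real.log_nonneg (by linarith)), mul_comm]
      exact mul_le_mul_of_nonneg_right
        (Real.rpow_le_rpow_of_nonpos hlx hlt (by linarith))
        (Real.rpow_nonneg ht1.le _)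
    calc F x ≤ ∫ t in Ioi x, Real.log (x + 1) ^ (-q) * (t + 1) ^ (-q) := by
          apply integral_mono_of_nonneg
          · filter_upwards [ae_restrict_mem measurableSet_Ioi] with t ht
            have ht1 : (1:ℝ) < t + 1 := by have := ht.out; linarith
            exact Real.rpow_nonneg (mul_nonneg (by linarith) (Real.log_nonneg ht1.le)) _
          · exact (hint.const_mul _)
          · filter_upwards [ae_restrict_mem measurableSet_Ioi] with t ht
            exact hmono t ht
      _ = Real.log (x + 1) ^ (-q) * ((x + 1) ^ (1 - q) / (q - 1)) := by
          rw [integral_const_mul, hval]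
  -- Step 2: pointwise bound for the rpow of F
  have hstep2 : ∀ x : ℝ, 1 < x → F x ^ (p / q) ≤ G x := by
    intro x hx
    have hlx : 0 < Real.log (x + 1) := Real.log_pos (by linarith)
    have hx1 : (0:ℝ) < x + 1 := by linarith
    have h1 : F x ^ (p / q)
        ≤ (Real.log (x + 1) ^ (-q) * ((x + 1) ^ (1 - q) / (q - 1))) ^ (p / q) :=
      Real.rpow_le_rpow (hFnonneg x hx) (hFB x hx) (by positivity)
    refine h1.trans_eq ?_
    have e1 : Real.log (x + 1) ^ (-q) * ((x + 1) ^ (1 - q) / (q - 1))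
        = (q - 1)⁻¹ * ((x + 1) ^ (1 - q) * Real.log (x + 1) ^ (-q)) := by ring
    rw [e1, Real.mul_rpow (by positivity) (by positivity),
      Real.mul_rpow (by positivity) (by positivity),
      ← Real.rpow_mul hx1.le, ← Real.rpow_mul hlx.le,
      Real.inv_rpow hq1.le, ← Real.rpow_neg hq1.le]
    have e2 : (1 - q) * (p / q) = -1 := by rw [hpq']; linear_combination hsum
    have e3 : (-q) * (p / q) = -p := by rw [hpq']; linear_combination hsum
    rw [e2, e3, Real.rpow_neg_one]
  -- Step 3: integral of G
  have hdG : ∀ x ∈ Ici (1:ℝ), HasDerivAt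
      (fun y : ℝ => C * (-(Real.log (y + 1) ^ (1 - p)) / (p - 1))) (G x) x := by
    intro x hx
    have hx1 : (0:ℝ) < x + 1 := by have := hx.out; linarith
    have hlx : 0 < Real.log (x + 1) := Real.log_pos (by have := hx.out; linarith)
    have h1 : HasDerivAt (fun y : ℝ => Real.log (y + 1)) ((x+1)⁻¹) x := by
      have := ((hasDerivAt_id x).add_const 1).log hx1.ne'
      simpa using this
    have h2 := h1.rpow_const (p := 1 - p) (Or.inl hlx.ne')
    have h3 := ((h2.neg).div_const (p - 1)).const_mul C
    convert h3 using 1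
    · rfl
    · rfl
    · rfl
    have e4 : (1:ℝ) - p - 1 = -p := by ring
    have hp1 : p - 1 ≠ 0 := by intro h; rw [sub_eq_zero] at h; exact absurd h.symm hp.ne
    rw [hG, e4]
    field_simp
    ring
  have hGpos : ∀ x ∈ Ioi (1:ℝ), 0 ≤ G x := by
    intro x hx
    have hx1 : (0:ℝ) < x + 1 := by have := hx.out; linarith
    have hlx : 0 < Real.log (x + 1) := Real.log_pos (by have := hx.out; linarith)
    positivity
  have hGtend : Tendsto (fun y : ℝ => C * (-(Real.log (y + 1) ^ (1 - p)) / (p - 1)))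
      atTop (𝓝 0) := by
    have h0 : Tendsto (fun y : ℝ => Real.log (y + 1) ^ (1 - p)) atTop (𝓝 0) := by
      have hb : Tendsto (fun y : ℝ => Real.log (y + 1)) atTop atTop :=
        Real.tendsto_log_atTop.comp (tendsto_atTop_add_const_right _ 1 tendsto_id)
      have := (tendsto_rpow_neg_atTop (by linarith : (0:ℝ) < p - 1)).comp hb
      simpa [neg_sub, Function.comp_def] using this
    have := ((h0.neg).div_const (p - 1)).const_mul C
    simpa using this
  have hGint : IntegrableOn G (Ioi (1:ℝ)) :=
    integrableOn_Ioi_deriv_of_nonneg' hdG hGpos hGtend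
  have hGval : ∫ x in Ioi (1:ℝ), G x = C * (p - 1)⁻¹ * Real.log 2 ^ (1 - p) := by
    rw [integral_Ioi_of_hasDerivAt_of_nonneg' hdG hGpos hGtend]
    norm_num
    ring
  -- Conclusion
  calc ∫⁻ x in Ioi (1:ℝ), ENNReal.ofReal (F x ^ (p / q))
      ≤ ∫⁻ x in Ioi (1:ℝ), ENNReal.ofReal (G x) := by
        apply lintegral_mono_ae
        filter_upwards [ae_restrict_mem measurableSet_Ioi] with x hx
        exact ENNReal.ofReal_le_ofReal (hstep2 x hx.out)
    _ = ENNReal.ofReal (∫ x in Ioi (1:ℝ), G x) := by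
        rw [ofReal_integral_eq_lintegral_ofReal hGint]
        filter_upwards [ae_restrict_mem measurableSet_Ioi] with x hx
        exact hGpos x hx
    _ = ENNReal.ofReal (C * (p - 1)⁻¹ * Real.log 2 ^ (1 - p)) := by rw [hGval]
end

section
/- Let H be a Hilbert space and let (x_n)_{n=0}^∞ be a sequence in H decomposed into finite consecutive blocks B_0, B_1, B_2, ..., where each block B_k spans a subspace V_k. Suppose each block is (1+ε_k)-basic, the blocks are 'almost orthogonal' in the sense that for unit vectors u ∈ span(V_0 ∪ ... ∪ V_{k-1}) and v ∈ V_k one has |⟨u, v⟩| ≤ δ_k, and ∑(ε_k + δ_k) < ∞. If the δ_k are small enough relative to the ε_k, then the full sequence (x_n) is C-basic for some constant C, with C → 1 as ∑(ε_k + δ_k) → 0. -/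
set_option maxHeartbeats 1000000

open Finset

theorem stmt5 :
    ∀ η : ℝ, 0 < η → ∃ θ : ℝ, 0 < θ ∧
      ∀ {H : Type} [inst : NormedAddCommGroup H] [inst2 : InnerProductSpace ℝ H]
        [inst3 : CompleteSpace H]
        (x : ℕ → H) (b : ℕ → ℕ) (ε δ : ℕ → ℝ),
        StrictMono b → b 0 = 0 →
        (∀ k, 0 ≤ ε k) → (∀ k, 0 ≤ δ k) →
        -- each block is (1 + ε k)-basic
        (∀ k (a : ℕ → ℝ) (m n : ℕ), b k ≤ m → m ≤ n → n ≤ b (k + 1) →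
          ‖∑ j ∈ Ico (b k) m, a j • x j‖ ≤ (1 + ε k) * ‖∑ j ∈ Ico (b k) n, a j • x j‖) →
        -- almost orthogonality between earlier blocks and block k
        (∀ k, 1 ≤ k → ∀ u v : H,
          u ∈ Submodule.span ℝ (x '' Set.Iio (b k)) →
          v ∈ Submodule.span ℝ (x '' Set.Ico (b k) (b (k + 1))) →
          ‖u‖ = 1 → ‖v‖ = 1 → |(inner ℝ u v : ℝ)| ≤ δ k) →
        Summable (fun k => ε k + δ k) →
        (∑' k, (ε k + δ k)) < θ →
        -- conclusion: the full sequence is (1 + η)-basic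
        ∀ (a : ℕ → ℝ) (m n : ℕ), m ≤ n →
          ‖∑ j ∈ range m, a j • x j‖ ≤ (1 + η) * ‖∑ j ∈ range n, a j • x j‖ := by
  classical
  intro η hη
  refine ⟨min η 1 / 18, by positivity, ?_⟩
  intro H _ _ _ x b ε δ hb hb0 hε hδ hblock horth hsum hsumlt a m n hmn
  set θ : ℝ := min η 1 / 18 with hθdef
  set t : ℝ := ∑' k, (ε k + δ k) with htdef
  have ht0 : 0 ≤ t := tsum_nonneg fun k => add_nonneg (hε k) (hδ k)
  -- individual terms bounded by t
  have hterm : ∀ k, ε k + δ k ≤ t := fun k =>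
    Summable.le_tsum hsum k fun j _ => add_nonneg (hε j) (hδ j)
  have hθ18 : θ ≤ 1 / 18 := by
    rw [hθdef]; have := min_le_right η 1; linarith
  have hδt : ∀ k, δ k ≤ t := fun k => by have := hterm k; have := hε k; linarith
  have hεt : ∀ k, ε k ≤ t := fun k => by have := hterm k; have := hδ k; linarith
  have hδhalf : ∀ k, δ k ≤ 1 / 2 := fun k => by
    have := hδt k; linarith [hsumlt, hθ18]
  have hδlt1 : ∀ k, δ k < 1 := fun k => by have := hδhalf k; linarith
  -- notation
  set S : ℕ → H := fun n => ∑ j ∈ range n, a j • x j with hS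
  set T : ℕ → ℕ → H := fun k m => ∑ j ∈ Ico (b k) m, a j • x j with hT
  have hsplit : ∀ k m, b k ≤ m → S (b k) + T k m = S m := fun k m h =>
    Finset.sum_range_add_sum_Ico _ h
  have memIio : ∀ k, S (b k) ∈ Submodule.span ℝ (x '' Set.Iio (b k)) := by
    intro k
    refine Submodule.sum_mem _ fun j hj => Submodule.smul_mem _ _ ?_
    exact Submodule.subset_span ⟨j, Finset.mem_range.mp hj, rfl⟩
  have memBlock : ∀ k m, m ≤ b (k + 1) →
      T k m ∈ Submodule.span ℝ (x '' Set.Ico (b k) (b (k + 1))) := by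
    intro k m hm
    refine Submodule.sum_mem _ fun j hj => Submodule.smul_mem _ _ ?_
    rw [Finset.mem_Ico] at hj
    exact Submodule.subset_span ⟨j, ⟨hj.1, lt_of_lt_of_le hj.2 hm⟩, rfl⟩
  clear_value S T
  -- inner product bound for arbitrary vectors
  have hinner : ∀ k, 1 ≤ k → ∀ u v : H,
      u ∈ Submodule.span ℝ (x '' Set.Iio (b k)) →
      v ∈ Submodule.span ℝ (x '' Set.Ico (b k) (b (k + 1))) →
      |(inner ℝ u v : ℝ)| ≤ δ k * (‖u‖ * ‖v‖) := by
    intro k hk u v hu hv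
    rcases eq_or_ne u 0 with rfl | hu0
    · simp [hδ k]
    rcases eq_or_ne v 0 with rfl | hv0
    · simp [hδ k]
    have hun : ‖u‖ ≠ 0 := norm_ne_zero_iff.mpr hu0
    have hvn : ‖v‖ ≠ 0 := norm_ne_zero_iff.mpr hv0
    have key := horth k hk (‖u‖⁻¹ • u) (‖v‖⁻¹ • v)
      (Submodule.smul_mem _ _ hu) (Submodule.smul_mem _ _ hv)
      (norm_smul_inv_norm hu0) (norm_smul_inv_norm hv0)
    rw [real_inner_smul_left, real_inner_smul_right, abs_mul, abs_mul,
      abs_inv, abs_inv, abs_norm, abs_norm] at key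
    have h1 : |(inner ℝ u v : ℝ)| = ‖u‖ * ‖v‖ * (‖u‖⁻¹ * (‖v‖⁻¹ * |(inner ℝ u v : ℝ)|)) := by
      field_simp
    rw [h1]
    calc ‖u‖ * ‖v‖ * (‖u‖⁻¹ * (‖v‖⁻¹ * |(inner ℝ u v : ℝ)|)) ≤ ‖u‖ * ‖v‖ * δ k := by
          apply mul_le_mul_of_nonneg_left key (by positivity)
      _ = δ k * (‖u‖ * ‖v‖) := by ring
  -- norm estimates for u + v
  have keyB : ∀ k, 1 ≤ k → ∀ u v : H,
      u ∈ Submodule.span ℝ (x '' Set.Iio (b k)) →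
      v ∈ Submodule.span ℝ (x '' Set.Ico (b k) (b (k + 1))) →
      ‖u + v‖ ^ 2 ≤ (1 + δ k) * (‖u‖ ^ 2 + ‖v‖ ^ 2) := by
    intro k hk u v hu hv
    have h := hinner k hk u v hu hv
    have hexp := norm_add_sq_real u v
    have habs := abs_le.mp h
    nlinarith [sq_nonneg (‖u‖ - ‖v‖), hδ k, norm_nonneg u, norm_nonneg v]
  have keyA : ∀ k, 1 ≤ k → ∀ u v : H,
      u ∈ Submodule.span ℝ (x '' Set.Iio (b k)) →
      v ∈ Submodule.span ℝ (x '' Set.Ico (b k) (b (k + 1))) →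
      (1 - δ k) * (‖u‖ ^ 2 + ‖v‖ ^ 2) ≤ ‖u + v‖ ^ 2 := by
    intro k hk u v hu hv
    have h := hinner k hk u v hu hv
    have hexp := norm_add_sq_real u v
    have habs := abs_le.mp h
    nlinarith [sq_nonneg (‖u‖ - ‖v‖), hδ k, norm_nonneg u, norm_nonneg v]
  -- one-step: ‖S (b K)‖² ≤ (1 - δ K)⁻¹ * ‖S n‖² for b K ≤ n ≤ b (K+1), K ≥ 1
  have step : ∀ K, 1 ≤ K → ∀ n', b K ≤ n' → n' ≤ b (K + 1) →
      ‖S (b K)‖ ^ 2 ≤ (1 - δ K)⁻¹ * ‖S n'‖ ^ 2 := by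
    intro K hK n' hn1 hn2
    have hA := keyA K hK (S (b K)) (T K n') (memIio K) (memBlock K n' hn2)
    rw [hsplit K n' hn1] at hA
    have hpos : (0:ℝ) < 1 - δ K := by linarith [hδlt1 K]
    rw [le_inv_mul_iff₀ hpos]
    nlinarith [norm_nonneg (T K n'), sq_nonneg ‖T K n'‖]
  -- chain along block boundaries
  have chain : ∀ K l, 1 ≤ l → l ≤ K →
      ‖S (b l)‖ ^ 2 ≤ (∏ i ∈ Ico l K, (1 - δ i)⁻¹) * ‖S (b K)‖ ^ 2 := by
    intro K
    induction K with
    | zero => intro l hl hlK; omega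
    | succ K ih =>
      intro l hl hlK
      rcases eq_or_lt_of_le hlK with heq | hlt
      · rw [heq]; simp
      · have hlK' : l ≤ K := by omega
        have hK1 : 1 ≤ K := le_trans hl hlK'
        have h1 := ih l hl hlK'
        have h2 := step K hK1 (b (K + 1)) (hb (Nat.lt_succ_self K)).le le_rfl
        have hprodnn : (0:ℝ) ≤ ∏ i ∈ Ico l K, (1 - δ i)⁻¹ :=
          Finset.prod_nonneg fun i _ => inv_nonneg.mpr (by linarith [hδlt1 i])
        have hrw : ∏ i ∈ Ico l (K + 1), (1 - δ i)⁻¹ =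
            (∏ i ∈ Ico l K, (1 - δ i)⁻¹) * (1 - δ K)⁻¹ :=
          Finset.prod_Ico_succ_top hlK' _
        rw [hrw]
        calc ‖S (b l)‖ ^ 2 ≤ (∏ i ∈ Ico l K, (1 - δ i)⁻¹) * ‖S (b K)‖ ^ 2 := h1
          _ ≤ (∏ i ∈ Ico l K, (1 - δ i)⁻¹) * ((1 - δ K)⁻¹ * ‖S (b (K + 1))‖ ^ 2) :=
              mul_le_mul_of_nonneg_left h2 hprodnn
          _ = (∏ i ∈ Ico l K, (1 - δ i)⁻¹) * (1 - δ K)⁻¹ * ‖S (b (K + 1))‖ ^ 2 := by ring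
  -- head lemma: within a single block
  have headLem : ∀ k m' n', b k ≤ m' → m' ≤ n' → n' ≤ b (k + 1) →
      ‖S m'‖ ^ 2 ≤ (1 + δ k) * (1 + ε k) ^ 2 * (1 - δ k)⁻¹ * ‖S n'‖ ^ 2 := by
    intro k m' n' h1 h2 h3
    have hδk := hδ k
    have hδk1 := hδlt1 k
    have hεk := hε k
    have hpos : (0:ℝ) < 1 - δ k := by linarith
    have hTle : ‖T k m'‖ ≤ (1 + ε k) * ‖T k n'‖ := by
      rw [hT]; exact hblock k a m' n' h1 h2 h3
    have hTsq : ‖T k m'‖ ^ 2 ≤ (1 + ε k) ^ 2 * ‖T k n'‖ ^ 2 := by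
      nlinarith [norm_nonneg (T k m'), norm_nonneg (T k n')]
    rcases Nat.eq_zero_or_pos k with rfl | hk
    · -- first block: S (b 0) = 0
      have hS0 : S (b 0) = 0 := by simp [hS, hb0]
      have hm : S m' = T 0 m' := by
        have := hsplit 0 m' h1; rw [hS0, zero_add] at this; exact this.symm
      have hn : S n' = T 0 n' := by
        have := hsplit 0 n' (le_trans h1 h2); rw [hS0, zero_add] at this; exact this.symm
      rw [hm, hn]
      have hfac : (1:ℝ) ≤ (1 + δ 0) * (1 - δ 0)⁻¹ := by
        have h12 : (1 - δ 0) ≤ (1 + δ 0) := by linarith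
        calc (1:ℝ) = (1 - δ 0) * (1 - δ 0)⁻¹ := (mul_inv_cancel₀ hpos.ne').symm
          _ ≤ (1 + δ 0) * (1 - δ 0)⁻¹ := mul_le_mul_of_nonneg_right h12 (inv_nonneg.mpr hpos.le)
      have hnn : (0:ℝ) ≤ (1 + ε 0) ^ 2 * ‖T 0 n'‖ ^ 2 := by positivity
      have hh := mul_le_mul_of_nonneg_left hfac hnn
      nlinarith [hTsq, hh]
    · have hB := keyB k hk (S (b k)) (T k m') (memIio k) (memBlock k m' (le_trans h2 h3))
      have hA := keyA k hk (S (b k)) (T k n') (memIio k) (memBlock k n' h3)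
      rw [hsplit k m' h1] at hB
      rw [hsplit k n' (le_trans h1 h2)] at hA
      rw [mul_comm ((1 + δ k) * (1 + ε k) ^ 2) (1 - δ k)⁻¹, mul_assoc,
        le_inv_mul_iff₀ hpos]
      have e1 : ‖S (b k)‖ ^ 2 + ‖T k m'‖ ^ 2 ≤
          (1 + ε k) ^ 2 * (‖S (b k)‖ ^ 2 + ‖T k n'‖ ^ 2) := by
        nlinarith [sq_nonneg ‖S (b k)‖, sq_nonneg (ε k)]
      have e2 : ‖S m'‖ ^ 2 ≤ (1 + δ k) * ((1 + ε k) ^ 2 * (‖S (b k)‖ ^ 2 + ‖T k n'‖ ^ 2)) := by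
        calc ‖S m'‖ ^ 2 ≤ (1 + δ k) * (‖S (b k)‖ ^ 2 + ‖T k m'‖ ^ 2) := hB
          _ ≤ _ := mul_le_mul_of_nonneg_left e1 (by linarith)
      have c1 : (0:ℝ) ≤ (1 + δ k) * (1 + ε k) ^ 2 := by positivity
      have h4 := mul_le_mul_of_nonneg_left e2 hpos.le
      have h5 := mul_le_mul_of_nonneg_left hA c1
      nlinarith [h4, h5]
  -- summability facts
  have hsumδ : Summable δ :=
    Summable.of_nonneg_of_le hδ (fun k => le_add_of_nonneg_left (hε k)) hsum
  have htsumδ : (∑' k, δ k) ≤ t := by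
    rw [htdef]
    exact Summable.tsum_le_tsum (fun k => le_add_of_nonneg_left (hε k)) hsumδ hsum
  have hsumδfin : ∀ s : Finset ℕ, (∑ i ∈ s, δ i) ≤ t := fun s =>
    le_trans (Summable.sum_le_tsum s (fun i _ => hδ i) hsumδ) htsumδ
  -- exponential bounds
  have hinvexp : ∀ i, (1 - δ i)⁻¹ ≤ Real.exp (2 * δ i) := by
    intro i
    have hpos : (0:ℝ) < 1 - δ i := by linarith [hδlt1 i]
    have h1 : (1:ℝ) ≤ (1 + 2 * δ i) * (1 - δ i) := by nlinarith [hδhalf i, hδ i]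
    have h2 : (1 - δ i)⁻¹ ≤ 1 + 2 * δ i := by
      calc (1 - δ i)⁻¹ = 1 * (1 - δ i)⁻¹ := (one_mul _).symm
        _ ≤ ((1 + 2 * δ i) * (1 - δ i)) * (1 - δ i)⁻¹ :=
            mul_le_mul_of_nonneg_right h1 (inv_nonneg.mpr hpos.le)
        _ = 1 + 2 * δ i := by rw [mul_assoc, mul_inv_cancel₀ hpos.ne', mul_one]
    calc (1 - δ i)⁻¹ ≤ 1 + 2 * δ i := h2
      _ ≤ Real.exp (2 * δ i) := by linarith [Real.add_one_le_exp (2 * δ i)]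
  have hprodexp : ∀ s : Finset ℕ, (∏ i ∈ s, (1 - δ i)⁻¹) ≤ Real.exp (∑ i ∈ s, 2 * δ i) := by
    intro s
    rw [Real.exp_sum]
    exact Finset.prod_le_prod (fun i _ => inv_nonneg.mpr (by linarith [hδlt1 i]))
      (fun i _ => hinvexp i)
  have hone : ∀ i, 1 + δ i ≤ Real.exp (δ i) := fun i => by
    linarith [Real.add_one_le_exp (δ i)]
  have honeε : ∀ i, (1 + ε i) ^ 2 ≤ Real.exp (2 * ε i) := by
    intro i
    have h1 : 1 + ε i ≤ Real.exp (ε i) := by linarith [Real.add_one_le_exp (ε i)]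
    calc (1 + ε i) ^ 2 ≤ Real.exp (ε i) ^ 2 := by nlinarith [hε i, Real.exp_pos (ε i)]
      _ = Real.exp (2 * ε i) := by rw [← Real.exp_nat_mul]; norm_num [mul_comm]
  -- final exponential estimate
  have expFinal : ∀ E : ℝ, E ≤ 9 * t → Real.exp E ≤ (1 + η) ^ 2 := by
    intro E hE
    set s : ℝ := min η 1 / 2 with hsdef
    have hs0 : 0 < s := by have := lt_min hη one_pos; positivity
    have hs12 : s ≤ 1 / 2 := by have := min_le_right η 1; rw [hsdef]; linarith
    have hsη : 2 * s ≤ η := by have := min_le_left η 1; rw [hsdef]; linarith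
    have hEs : E ≤ s := by
      have h9 : 9 * t ≤ 9 * θ := by linarith [hsumlt]
      have : 9 * θ ≤ s := by rw [hθdef, hsdef]; linarith
      linarith
    have hspos : (0:ℝ) < 1 - s := by linarith
    have hexps : Real.exp s ≤ (1 - s)⁻¹ := by
      have h1 : 1 - s ≤ Real.exp (-s) := by linarith [Real.add_one_le_exp (-s)]
      have h2 : Real.exp s * (1 - s) ≤ 1 := by
        calc Real.exp s * (1 - s) ≤ Real.exp s * Real.exp (-s) :=
              mul_le_mul_of_nonneg_left h1 (Real.exp_pos s).le
          _ = 1 := by rw [← Real.exp_add]; simp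
      rw [inv_eq_one_div, le_div_iff₀ hspos]
      exact h2
    have hinvs : (1 - s)⁻¹ ≤ 1 + 2 * s := by
      have h1 : (1:ℝ) ≤ (1 + 2 * s) * (1 - s) := by nlinarith
      calc (1 - s)⁻¹ = 1 * (1 - s)⁻¹ := (one_mul _).symm
        _ ≤ ((1 + 2 * s) * (1 - s)) * (1 - s)⁻¹ :=
            mul_le_mul_of_nonneg_right h1 (inv_nonneg.mpr hspos.le)
        _ = 1 + 2 * s := by rw [mul_assoc, mul_inv_cancel₀ hspos.ne', mul_one]
    calc Real.exp E ≤ Real.exp s := Real.exp_le_exp.mpr hEs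
      _ ≤ (1 - s)⁻¹ := hexps
      _ ≤ 1 + 2 * s := hinvs
      _ ≤ 1 + η := by linarith
      _ ≤ (1 + η) ^ 2 := by nlinarith
  -- locate m and n in blocks
  have hble : ∀ j, j ≤ b j := fun j => hb.le_apply
  have exists_block : ∀ p : ℕ, ∃ k, b k ≤ p ∧ p < b (k + 1) := by
    intro p
    set P : ℕ → Prop := fun k => b k ≤ p with hP
    have hspec : P (Nat.findGreatest P p) :=
      Nat.findGreatest_spec (Nat.zero_le p) (show P 0 by simp [hP, hb0])
    refine ⟨Nat.findGreatest P p, hspec, ?_⟩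
    by_contra hlt
    push_neg at hlt
    have hPsucc : P (Nat.findGreatest P p + 1) := hlt
    have h1 : Nat.findGreatest P p + 1 ≤ p := le_trans (hble _) hlt
    have h2 : Nat.findGreatest P p + 1 ≤ Nat.findGreatest P p :=
      Nat.le_findGreatest h1 hPsucc
    omega
  obtain ⟨k, hkm, hkm2⟩ := exists_block m
  obtain ⟨K, hKn, hKn2⟩ := exists_block n
  have hkK : k ≤ K := by
    by_contra hc
    push_neg at hc
    have : b (K + 1) ≤ b k := hb.monotone hc
    omega
  -- the squared inequality
  have hsq : ‖S m‖ ^ 2 ≤ (1 + η) ^ 2 * ‖S n‖ ^ 2 := by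
    rcases eq_or_lt_of_le hkK with rfl | hlt
    · -- same block
      have h1 := headLem k m n hkm hmn hKn2.le
      have hc : (1 + δ k) * (1 + ε k) ^ 2 * (1 - δ k)⁻¹ ≤ (1 + η) ^ 2 := by
        have e1 : (1 + δ k) * (1 + ε k) ^ 2 * (1 - δ k)⁻¹ ≤
            Real.exp (δ k) * Real.exp (2 * ε k) * Real.exp (2 * δ k) := by
          have hpos : (0:ℝ) < 1 - δ k := by linarith [hδlt1 k]
          have i1 := hone k
          have i2 := honeε k
          have i3 := hinvexp k
          have n1 : (0:ℝ) ≤ 1 + δ k := by linarith [hδ k]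
          have n2 : (0:ℝ) ≤ (1 + ε k) ^ 2 := by positivity
          exact mul_le_mul (mul_le_mul i1 i2 n2 (Real.exp_pos _).le)
            i3 (inv_nonneg.mpr hpos.le) (by positivity)
        have e2 : Real.exp (δ k) * Real.exp (2 * ε k) * Real.exp (2 * δ k) =
            Real.exp (δ k + 2 * ε k + 2 * δ k) := by
          rw [← Real.exp_add, ← Real.exp_add]
        have e3 : δ k + 2 * ε k + 2 * δ k ≤ 9 * t := by
          have := hδt k; have := hεt k; linarith
        rw [e2] at e1
        exact le_trans e1 (expFinal _ e3)
      calc ‖S m‖ ^ 2 ≤ (1 + δ k) * (1 + ε k) ^ 2 * (1 - δ k)⁻¹ * ‖S n‖ ^ 2 := h1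
        _ ≤ (1 + η) ^ 2 * ‖S n‖ ^ 2 :=
            mul_le_mul_of_nonneg_right hc (sq_nonneg _)
    · -- k < K
      have hk1K : k + 1 ≤ K := hlt
      have hK1 : 1 ≤ K := le_trans (Nat.le_add_left 1 k) hk1K
      have hbk1 : b (k + 1) ≤ b K := hb.monotone hk1K
      have A := headLem k m (b (k + 1)) hkm hkm2.le le_rfl
      have B := chain K (k + 1) (Nat.le_add_left 1 k) hk1K
      have C := step K hK1 n hKn hKn2.le
      set c1 : ℝ := (1 + δ k) * (1 + ε k) ^ 2 * (1 - δ k)⁻¹ with hc1def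
      set P : ℝ := ∏ i ∈ Ico (k + 1) K, (1 - δ i)⁻¹ with hPdef
      have hc1nn : 0 ≤ c1 := by
        rw [hc1def]
        have hpos : (0:ℝ) < 1 - δ k := by linarith [hδlt1 k]
        have := hδ k; have := hε k; positivity
      have hPnn : 0 ≤ P := Finset.prod_nonneg fun i _ => inv_nonneg.mpr (by linarith [hδlt1 i])
      have hcomb : ‖S m‖ ^ 2 ≤ c1 * (P * ((1 - δ K)⁻¹ * ‖S n‖ ^ 2)) := by
        calc ‖S m‖ ^ 2 ≤ c1 * ‖S (b (k + 1))‖ ^ 2 := A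
          _ ≤ c1 * (P * ‖S (b K)‖ ^ 2) := mul_le_mul_of_nonneg_left B hc1nn
          _ ≤ c1 * (P * ((1 - δ K)⁻¹ * ‖S n‖ ^ 2)) :=
              mul_le_mul_of_nonneg_left (mul_le_mul_of_nonneg_left C hPnn) hc1nn
      -- bound the constant
      have hconst : c1 * (P * (1 - δ K)⁻¹) ≤ (1 + η) ^ 2 := by
        have hposk : (0:ℝ) < 1 - δ k := by linarith [hδlt1 k]
        have hposK : (0:ℝ) < 1 - δ K := by linarith [hδlt1 K]
        have i1 := hone k
        have i2 := honeε k
        have i3 := hinvexp k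
        have i4 := hprodexp (Ico (k + 1) K)
        have i5 := hinvexp K
        have e1 : c1 * (P * (1 - δ K)⁻¹) ≤
            Real.exp (δ k) * Real.exp (2 * ε k) * Real.exp (2 * δ k) *
              (Real.exp (∑ i ∈ Ico (k + 1) K, 2 * δ i) * Real.exp (2 * δ K)) := by
          rw [hc1def, hPdef]
          have n2 : (0:ℝ) ≤ (1 + ε k) ^ 2 := by positivity
          apply mul_le_mul
          · apply mul_le_mul (mul_le_mul i1 i2 n2 (Real.exp_pos _).le)
              i3 (inv_nonneg.mpr hposk.le) (by positivity)
          · exact mul_le_mul i4 i5 (inv_nonneg.mpr hposK.le) (Real.exp_pos _).le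
          · exact mul_nonneg hPnn (inv_nonneg.mpr hposK.le)
          · positivity
        have e2 : Real.exp (δ k) * Real.exp (2 * ε k) * Real.exp (2 * δ k) *
              (Real.exp (∑ i ∈ Ico (k + 1) K, 2 * δ i) * Real.exp (2 * δ K)) =
            Real.exp (δ k + 2 * ε k + 2 * δ k +
              ((∑ i ∈ Ico (k + 1) K, 2 * δ i) + 2 * δ K)) := by
          rw [← Real.exp_add, ← Real.exp_add, ← Real.exp_add, ← Real.exp_add]
        have e3 : δ k + 2 * ε k + 2 * δ k + ((∑ i ∈ Ico (k + 1) K, 2 * δ i) + 2 * δ K) ≤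
            9 * t := by
          have s1 := hδt k
          have s2 := hεt k
          have s3 := hδt K
          have s4 : (∑ i ∈ Ico (k + 1) K, 2 * δ i) ≤ 2 * t := by
            rw [← Finset.mul_sum]
            have := hsumδfin (Ico (k + 1) K)
            linarith
          linarith
        rw [e2] at e1
        exact le_trans e1 (expFinal _ e3)
      calc ‖S m‖ ^ 2 ≤ c1 * (P * ((1 - δ K)⁻¹ * ‖S n‖ ^ 2)) := hcomb
        _ = c1 * (P * (1 - δ K)⁻¹) * ‖S n‖ ^ 2 := by ring
        _ ≤ (1 + η) ^ 2 * ‖S n‖ ^ 2 := mul_le_mul_of_nonneg_right hconst (sq_nonneg _)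
  -- take square roots
  have h1η : (0:ℝ) ≤ 1 + η := by linarith
  have hfinal : ‖S m‖ ≤ (1 + η) * ‖S n‖ := by
    have hroot := Real.sqrt_le_sqrt hsq
    rw [Real.sqrt_sq (norm_nonneg _),
      show (1 + η) ^ 2 * ‖S n‖ ^ 2 = ((1 + η) * ‖S n‖) ^ 2 by ring,
      Real.sqrt_sq (mul_nonneg h1η (norm_nonneg _))] at hroot
    exact hroot
  rw [hS] at hfinal
  simpa using hfinal
end

section
/- Let 1 ≤ p < ∞. If a Banach lattice X has a Schauder frame (x_j, f_j)_{j=1}^∞, then X has a Schauder frame consisting of positive vectors; namely, the interleaved sequence (x_1^+, f_1), (x_1^-, −f_1), (x_2^+, f_2), (x_2^-, −f_2), ... is a Schauder frame for X. -/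
open Finset Filter Topology

private lemma tendsto_even_odd {α : Type*} {g : ℕ → α} {l : Filter α}
    (he : Tendsto (fun n => g (2 * n)) atTop l)
    (ho : Tendsto (fun n => g (2 * n + 1)) atTop l) :
    Tendsto g atTop l := by
  rw [Filter.tendsto_def] at he ho ⊢
  intro s hs
  obtain ⟨N1, h1⟩ := mem_atTop_sets.1 (he s hs)
  obtain ⟨N2, h2⟩ := mem_atTop_sets.1 (ho s hs)
  refine mem_atTop_sets.2 ⟨2 * (max N1 N2) + 1, fun n hn => ?_⟩
  rcases Nat.even_or_odd n with ⟨k, hk⟩ | ⟨k, hk⟩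
  · have h : n = 2 * k := by omega
    rw [h]; exact h1 k (by omega)
  · have h : n = 2 * k + 1 := by omega
    rw [h]; exact h2 k (by omega)

theorem stmt7 {X : Type*} [NormedAddCommGroup X] [Lattice X] [HasSolidNorm X]
    [IsOrderedAddMonoid X] [NormedSpace ℝ X]
    [CompleteSpace X]
    (x : ℕ → X) (f : ℕ → X →L[ℝ] ℝ)
    (hframe : ∀ y : X,
      Tendsto (fun n => ∑ j ∈ range n, f j y • x j) atTop (𝓝 y)) :
    (∀ j : ℕ, 0 ≤ (fun j => if Even j then (x (j / 2))⁺ else (x (j / 2))⁻) j) ∧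
    ∀ y : X,
      Tendsto (fun n => ∑ j ∈ range n,
          (if Even j then f (j / 2) y else -(f (j / 2) y)) •
            (if Even j then (x (j / 2))⁺ else (x (j / 2))⁻))
        atTop (𝓝 y) := by
  constructor
  · intro j
    by_cases h : Even j <;> simp [h, posPart_nonneg, negPart_nonneg]
  intro y
  set g : ℕ → X := fun j =>
      (if Even j then f (j / 2) y else -(f (j / 2) y)) •
        (if Even j then (x (j / 2))⁺ else (x (j / 2))⁻) with hg
  set T : ℕ → X := fun n => ∑ j ∈ range n, f j y • x j with hT
  have hgeven : ∀ k, g (2 * k) = f k y • (x k)⁺ := by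
    intro k
    simp [hg, even_two_mul k, Nat.mul_div_cancel_left k two_pos]
  have hgodd : ∀ k, g (2 * k + 1) = -(f k y • (x k)⁻) := by
    intro k
    have : ¬ Even (2 * k + 1) := by simp [Nat.even_add_one, even_two_mul k]
    simp [hg, this, Nat.mul_add_div two_pos, neg_smul]
  have key : ∀ n, ∑ j ∈ range (2 * n), g j = T n := by
    intro n
    induction n with
    | zero => simp [hT]
    | succ n ih =>
      have h2n : 2 * (n + 1) = 2 * n + 1 + 1 := by ring
      rw [h2n, Finset.sum_range_succ, Finset.sum_range_succ, ih]
      simp only [hT, hgeven, hgodd]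
      rw [Finset.sum_range_succ]
      have hx : f n y • (x n)⁺ + -(f n y • (x n)⁻) = f n y • x n := by
        rw [← smul_neg, ← smul_add]
        congr 1
        rw [← sub_eq_add_neg, posPart_sub_negPart]
      rw [add_assoc, hx]
  -- tail term tends to 0
  have hterm : Tendsto (fun n => f n y • x n) atTop (𝓝 0) := by
    have h1 := (hframe y).comp (tendsto_add_atTop_nat 1)
    have := h1.sub (hframe y)
    simp only [Function.comp] at this
    have heq : (fun n => (∑ j ∈ range (n + 1), f j y • x j) - ∑ j ∈ range n, f j y • x j)
        = fun n => f n y • x n := by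
      funext n; rw [Finset.sum_range_succ]; abel
    rw [heq, sub_self] at this
    exact this
  have hpos : Tendsto (fun n => f n y • (x n)⁺) atTop (𝓝 0) := by
    apply squeeze_zero_norm _ (by simpa using hterm.norm)
    intro n
    rw [norm_smul, norm_smul]
    gcongr
    apply HasSolidNorm.solid
    rw [abs_of_nonneg (posPart_nonneg _), posPart_def]
    exact sup_le (le_abs_self _) (abs_nonneg _)
  apply tendsto_even_odd
  · have : (fun n => ∑ j ∈ range (2 * n), g j) = T := funext key
    rw [this]
    exact hframe y
  · have heq : (fun n => ∑ j ∈ range (2 * n + 1), g j)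
        = fun n => T n + f n y • (x n)⁺ := by
      funext n
      rw [Finset.sum_range_succ, key, hgeven]
    rw [heq]
    simpa using (hframe y).add hpos
end

section
/- Let X be a Banach space, Y ⊆ X a closed subspace complemented by a bounded projection P: X → Y, and let (x_j, f_j)_{j=1}^∞ be a Schauder frame of X. Then (P x_j, f_j|_Y)_{j=1}^∞ is a Schauder frame of Y. -/
open Finset Filter Topology

theorem stmt8 {X : Type*} [NormedAddCommGroup X] [NormedSpace ℝ X] [CompleteSpace X]
    (Y : Submodule ℝ X) (hY : IsClosed (Y : Set X))
    (P : X →L[ℝ] Y) (hP : ∀ y : Y, P (y : X) = y)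
    (x : ℕ → X) (f : ℕ → X →L[ℝ] ℝ)
    (hframe : ∀ z : X,
      Tendsto (fun n => ∑ j ∈ range n, f j z • x j) atTop (𝓝 z)) :
    ∀ y : Y,
      Tendsto (fun n => ∑ j ∈ range n, f j (y : X) • P (x j)) atTop (𝓝 y) := by
  intro y
  have h := (P.continuous.tendsto _).comp (hframe (y : X))
  simpa [Function.comp_def, map_sum, hP y] using h
end

section
/- Let N ∈ ℕ, let (a_j)_{j=1}^N be positive reals, let A = ∑_{j=1}^N a_j, and assume A > ε^{-2} for some ε > 0. Let (f_j)_{j=1}^{2N} be an orthonormal family in a Hilbert space and for 1 ≤ n ≤ N let x_{2n-1} and x_{2n} be defined as in Lemma 2.1 of the paper (cyclic shifts of x_1 = e_1 + ∑ a_j e_{2j} + ∑ ε a_j f_{2j} and x_2 = e_2 + εc f_1 for the orthonormal family (e_j)). Then the vector y = ∑_{j=1}^N (c/√N) f_{2j-1} − ∑_{j=1}^N (1/√N) f_{2j} satisfies dist(y, span(x_j)_{j=1}^{2N}) ≤ ε; specifically, ‖(∑_{j=1}^N (−1/(ε A √N)) x_{2j-1} + (1/(ε √N)) x_{2j}) −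 y‖ = 1/(εA) < ε. -/
open Finset

/-- Simultaneous cyclic right shift by `m` on both coordinates of
`ℓ₂(ℤ_M) ⊕ ℓ₂(ℤ_M)`. -/
noncomputable def cycShift (M : ℕ) [NeZero M] (m : ℕ)
    (v : EuclideanSpace ℝ (Fin M ⊕ Fin M)) : EuclideanSpace ℝ (Fin M ⊕ Fin M) :=
  WithLp.toLp 2 fun i => match i with
  | Sum.inl k => v (Sum.inl (k - Fin.ofNat M m))
  | Sum.inr k => v (Sum.inr (k - Fin.ofNat M m))

/-- The vector `x₁ = e₁ + ∑_{j=1}^N a_j e_{2j} + ∑_{j=1}^N ε a_j f_{2j}`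
(indices of `Fin (2N)` are 0-based, so `e_m` is coordinate `m - 1`). -/
noncomputable def xOne (N : ℕ) (ε : ℝ) (a : ℕ → ℝ) :
    EuclideanSpace ℝ (Fin (2 * N) ⊕ Fin (2 * N)) :=
  WithLp.toLp 2 fun i => match i with
  | Sum.inl k => if k.val = 0 then 1 else if k.val % 2 = 1 then a ((k.val + 1) / 2) else 0
  | Sum.inr k => if k.val % 2 = 1 then ε * a ((k.val + 1) / 2) else 0

/-- The vector `x₂ = e₂ + ε c f₁`. -/
noncomputable def xTwo (N : ℕ) (ε c : ℝ) :
    EuclideanSpace ℝ (Fin (2 * N) ⊕ Fin (2 * N)) :=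
  WithLp.toLp 2 fun i => match i with
  | Sum.inl k => if k.val = 1 then 1 else 0
  | Sum.inr k => if k.val = 0 then ε * c else 0

/-- The sequence `x_1, x_2, …, x_{2N}` from Lemma 2.1:
`x_{2n+1} = T_{2n} x₁` and `x_{2n+2} = T_{2n} x₂`. -/
noncomputable def xSeq (N : ℕ) [NeZero (2 * N)] (ε c : ℝ) (a : ℕ → ℝ) :
    ℕ → EuclideanSpace ℝ (Fin (2 * N) ⊕ Fin (2 * N)) :=
  fun j => if j % 2 = 1 then cycShift (2 * N) (j - 1) (xOne N ε a)
    else cycShift (2 * N) (j - 2) (xTwo N ε c)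

/-- The target vector `y = ∑_{j=1}^N (c/√N) f_{2j-1} - ∑_{j=1}^N (1/√N) f_{2j}`. -/
noncomputable def yVec (N : ℕ) (c : ℝ) :
    EuclideanSpace ℝ (Fin (2 * N) ⊕ Fin (2 * N)) :=
  WithLp.toLp 2 fun i => match i with
  | Sum.inl _ => 0
  | Sum.inr k => if k.val % 2 = 0 then c / Real.sqrt N else -1 / Real.sqrt N


lemma shiftVal (N : ℕ) [NeZero (2*N)] (k : Fin (2*N)) (j : ℕ) (hj : j < N) :
    (k - (Fin.ofNat (2*N) (2*j))).val
      = if 2*j ≤ k.val then k.val - 2*j else k.val + 2*N - 2*j := by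
  have hk := k.isLt
  have hcast : (Fin.ofNat (2*N) (2*j)).val = 2*j := by
    rw [Fin.val_ofNat]; exact Nat.mod_eq_of_lt (by omega)
  rw [Fin.sub_def]
  show (2*N - (Fin.ofNat (2*N) (2*j)).val + k.val) % (2*N) = _
  rw [hcast]
  split_ifs with h
  · have : 2*N - 2*j + k.val = (k.val - 2*j) + 2*N := by omega
    rw [this, Nat.add_mod_right, Nat.mod_eq_of_lt (by omega)]
  · rw [Nat.mod_eq_of_lt (by omega)]; omega

lemma sumA (N : ℕ) (a : ℕ → ℝ) (k : ℕ) (hk : k < 2*N) (hodd : k % 2 = 1) :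
    ∑ j ∈ range N, a (((if 2*j ≤ k then k - 2*j else k + 2*N - 2*j) + 1)/2)
      = ∑ i ∈ Icc 1 N, a i := by
  refine Finset.sum_bij'
    (fun j _ => ((if 2*j ≤ k then k - 2*j else k + 2*N - 2*j) + 1)/2)
    (fun i _ => if i ≤ (k+1)/2 then (k+1)/2 - i else (k+1)/2 + N - i)
    ?_ ?_ ?_ ?_ (fun x hx => rfl) <;>
  · intro x hx
    simp only [mem_range, mem_Icc] at hx ⊢
    try dsimp only
    try simp only [mem_range, mem_Icc]
    split_ifs <;> omega

lemma sum_even_const (n : ℕ) (r : ℝ) :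
    ∑ i ∈ range (2*n), (if i % 2 = 0 then r else 0) = n * r := by
  induction n with
  | zero => simp
  | succ m ih =>
    have h2 : 2*(m+1) = (2*m) + 1 + 1 := by omega
    rw [h2, Finset.sum_range_succ, Finset.sum_range_succ, ih]
    rw [if_pos (by omega : (2*m) % 2 = 0), if_neg (by omega : ¬ (2*m+1) % 2 = 0)]
    push_cast; ring

lemma zApply (N : ℕ) (hN : 0 < N) [NeZero (2*N)] (ε c : ℝ) (a : ℕ → ℝ) (A : ℝ)
    (hA : A = ∑ j ∈ Icc 1 N, a j) (α β : ℝ) (i : Fin (2*N) ⊕ Fin (2*N)) :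
    (∑ j ∈ range N, (α • xSeq N ε c a (2*j+1) + β • xSeq N ε c a (2*j+2))) i =
      match i with
      | Sum.inl k => if k.val % 2 = 0 then α else α * A + β
      | Sum.inr k => if k.val % 2 = 0 then β * (ε*c) else α * (ε*A) := by
  have hx1 : ∀ j : ℕ, xSeq N ε c a (2*j+1) = cycShift (2*N) (2*j) (xOne N ε a) := by
    intro j
    have h1 : (2*j+1) % 2 = 1 := by omega
    have h2 : 2*j+1-1 = 2*j := by omega
    simp [xSeq, h1, h2]
  have hx2 : ∀ j : ℕ, xSeq N ε c a (2*j+2) = cycShift (2*N) (2*j) (xTwo N ε c) := by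
    intro j
    have h1 : (2*j+2) % 2 = 0 := by omega
    have h2 : 2*j+2-2 = 2*j := by omega
    simp [xSeq, h1, h2]
  rw [WithLp.ofLp_sum, Finset.sum_apply]
  simp only [PiLp.add_apply, PiLp.smul_apply, smul_eq_mul, hx1, hx2]
  rcases i with k | k
  · simp only [cycShift, xOne, xTwo, PiLp.toLp_apply]
    have hkv := k.isLt
    rcases Nat.mod_two_eq_zero_or_one k.val with hk2 | hk2
    · 
      rw [if_pos hk2]
      have hterm : ∀ j ∈ range N,
          (α * (if (k - (Fin.ofNat (2*N) (2*j))).val = 0 then 1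
              else if (k - (Fin.ofNat (2*N) (2*j))).val % 2 = 1
                then a (((k - (Fin.ofNat (2*N) (2*j))).val + 1) / 2) else 0)
            + β * (if (k - (Fin.ofNat (2*N) (2*j))).val = 1 then 1 else 0))
          = if j = k.val / 2 then α else 0 := by
        intro j hj
        rw [mem_range] at hj
        rw [shiftVal N k j hj]
        split_ifs <;> first | ring1 | omega
      rw [Finset.sum_congr rfl hterm, Finset.sum_ite_eq' (range N) (k.val/2) (fun _ => α)]
      have hmem : k.val / 2 ∈ range N := by rw [mem_range]; omega
      rw [if_pos hmem]
    · rw [if_neg (by omega)]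
      have hterm : ∀ j ∈ range N,
          (α * (if (k - (Fin.ofNat (2*N) (2*j))).val = 0 then 1
              else if (k - (Fin.ofNat (2*N) (2*j))).val % 2 = 1
                then a (((k - (Fin.ofNat (2*N) (2*j))).val + 1) / 2) else 0)
            + β * (if (k - (Fin.ofNat (2*N) (2*j))).val = 1 then 1 else 0))
          = α * a (((if 2*j ≤ k.val then k.val - 2*j else k.val + 2*N - 2*j) + 1) / 2)
            + (if j = (k.val - 1) / 2 then β else 0) := by
        intro j hj
        rw [mem_range] at hj
        rw [shiftVal N k j hj]
        split_ifs <;> first | ring1 | omega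
      rw [Finset.sum_congr rfl hterm, Finset.sum_add_distrib, ← Finset.mul_sum,
        sumA N a k.val k.isLt hk2, Finset.sum_ite_eq' (range N) ((k.val-1)/2) (fun _ => β)]
      have hmem : (k.val - 1) / 2 ∈ range N := by rw [mem_range]; omega
      rw [if_pos hmem, hA]
  · simp only [cycShift, xOne, xTwo, PiLp.toLp_apply]
    have hkv := k.isLt
    rcases Nat.mod_two_eq_zero_or_one k.val with hk2 | hk2
    · 
      rw [if_pos hk2]
      have hterm : ∀ j ∈ range N,
          (α * (if (k - (Fin.ofNat (2*N) (2*j))).val % 2 = 1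
                then ε * a (((k - (Fin.ofNat (2*N) (2*j))).val + 1) / 2) else 0)
            + β * (if (k - (Fin.ofNat (2*N) (2*j))).val = 0 then ε * c else 0))
          = if j = k.val / 2 then β * (ε*c) else 0 := by
        intro j hj
        rw [mem_range] at hj
        rw [shiftVal N k j hj]
        split_ifs <;> first | ring1 | omega
      rw [Finset.sum_congr rfl hterm, Finset.sum_ite_eq' (range N) (k.val/2) (fun _ => β*(ε*c))]
      have hmem : k.val / 2 ∈ range N := by rw [mem_range]; omega
      rw [if_pos hmem]
    · rw [if_neg (by omega)]
      have hterm : ∀ j ∈ range N,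
          (α * (if (k - (Fin.ofNat (2*N) (2*j))).val % 2 = 1
                then ε * a (((k - (Fin.ofNat (2*N) (2*j))).val + 1) / 2) else 0)
            + β * (if (k - (Fin.ofNat (2*N) (2*j))).val = 0 then ε * c else 0))
          = (α * ε) * a (((if 2*j ≤ k.val then k.val - 2*j else k.val + 2*N - 2*j) + 1) / 2) := by
        intro j hj
        rw [mem_range] at hj
        rw [shiftVal N k j hj]
        split_ifs <;> first | ring1 | omega
      rw [Finset.sum_congr rfl hterm, ← Finset.mul_sum, sumA N a k.val k.isLt hk2, hA]
      ring

theorem stmt16 (N : ℕ) (hN : 0 < N) [NeZero (2 * N)] (ε c : ℝ)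
    (hε : 0 < ε) (hc0 : 0 < c) (hc1 : c ≤ 1)
    (a : ℕ → ℝ) (ha : ∀ j, 1 ≤ j → j ≤ N → 0 < a j)
    (A : ℝ) (hA : A = ∑ j ∈ Icc 1 N, a j) (hAbig : A > ε⁻¹ ^ 2) :
    ‖(∑ j ∈ range N,
        ((-1 / (ε * A * Real.sqrt N)) • xSeq N ε c a (2 * j + 1) +
          (1 / (ε * Real.sqrt N)) • xSeq N ε c a (2 * j + 2))) - yVec N c‖
      = 1 / (ε * A) ∧
    1 / (ε * A) < ε ∧
    Metric.infDist (yVec N c)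
      (Submodule.span ℝ (xSeq N ε c a '' Set.Icc 1 (2 * N)) :
        Set (EuclideanSpace ℝ (Fin (2 * N) ⊕ Fin (2 * N)))) ≤ ε := by

  have hkN : (0:ℝ) < (N:ℝ) := by exact_mod_cast hN
  have hsN : (0:ℝ) < Real.sqrt N := Real.sqrt_pos.mpr hkN
  have hεinv : (0:ℝ) < ε⁻¹^2 := by positivity
  have hA0 : (0:ℝ) < A := lt_trans hεinv hAbig
  set α : ℝ := -1 / (ε * A * Real.sqrt N) with hα
  set β : ℝ := 1 / (ε * Real.sqrt N) with hβ
  have hαA : α * A + β = 0 := by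
    rw [hα, hβ]; field_simp; ring
  have hβc : β * (ε*c) = c / Real.sqrt N := by
    rw [hβ]; field_simp
  have hαε : α * (ε*A) = -1 / Real.sqrt N := by
    rw [hα]; field_simp
  have key : ∀ i, ((∑ j ∈ range N,
        (α • xSeq N ε c a (2*j+1) + β • xSeq N ε c a (2*j+2))) - yVec N c) i
      = (Sum.elim (fun k : Fin (2*N) => if k.val % 2 = 0 then α else 0)
          (fun _ => (0:ℝ)) i) := by
    intro i
    rw [PiLp.sub_apply, zApply N hN ε c a A hA α β i]
    rcases i with k | k
    · simp only [yVec, Sum.elim_inl]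
      split_ifs with h
      · ring
      · rw [hαA]; ring
    · simp only [yVec, Sum.elim_inr]
      split_ifs with h
      · rw [hβc]; ring
      · rw [hαε]; ring
  have hnorm : ‖(∑ j ∈ range N,
        (α • xSeq N ε c a (2*j+1) + β • xSeq N ε c a (2*j+2))) - yVec N c‖
      = 1 / (ε * A) := by
    rw [EuclideanSpace.norm_eq]
    have hsum : ∑ i : Fin (2*N) ⊕ Fin (2*N),
        ‖((∑ j ∈ range N,
          (α • xSeq N ε c a (2*j+1) + β • xSeq N ε c a (2*j+2))) - yVec N c) i‖^2
        = (N:ℝ) * α^2 := by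
      rw [Fintype.sum_sum_type]
      have h1 : ∀ k : Fin (2*N),
          ‖((∑ j ∈ range N,
            (α • xSeq N ε c a (2*j+1) + β • xSeq N ε c a (2*j+2))) - yVec N c)
            (Sum.inl k)‖^2 = if k.val % 2 = 0 then α^2 else 0 := by
        intro k
        rw [key (Sum.inl k), Sum.elim_inl]
        by_cases h : k.val % 2 = 0
        · rw [if_pos h, if_pos h, Real.norm_eq_abs, sq_abs]
        · rw [if_neg h, if_neg h]; simp
      have h2 : ∀ k : Fin (2*N),
          ‖((∑ j ∈ range N,
            (α • xSeq N ε c a (2*j+1) + β • xSeq N ε c a (2*j+2))) - yVec N c)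
            (Sum.inr k)‖^2 = 0 := by
        intro k
        rw [key (Sum.inr k), Sum.elim_inr]
        simp
      rw [Finset.sum_congr rfl (fun k _ => h1 k), Finset.sum_congr rfl (fun k _ => h2 k)]
      rw [Finset.sum_const, Fin.sum_univ_eq_sum_range (fun i => if i % 2 = 0 then α^2 else 0),
        sum_even_const N (α^2)]
      simp
    rw [hsum]
    have hval : (N:ℝ) * α^2 = (1/(ε*A))^2 := by
      rw [hα, div_pow, div_pow, mul_pow ε A, mul_pow (ε*A) (Real.sqrt N),
        Real.sq_sqrt (le_of_lt hkN)]
      field_simp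
    rw [hval, Real.sqrt_sq (by positivity)]
  have hlt : 1 / (ε * A) < ε := by
    have hεA : (0:ℝ) < ε * A := by positivity
    rw [div_lt_iff₀ hεA]
    have h2 : ε^2 * ε⁻¹^2 < ε^2 * A := by
      exact mul_lt_mul_of_pos_left hAbig (by positivity)
    have h3 : ε^2 * ε⁻¹^2 = 1 := by field_simp
    nlinarith [h2, h3]
  refine ⟨hnorm, hlt, ?_⟩
  have hz_mem : (∑ j ∈ range N,
      (α • xSeq N ε c a (2*j+1) + β • xSeq N ε c a (2*j+2)))
      ∈ Submodule.span ℝ (xSeq N ε c a '' Set.Icc 1 (2 * N)) := by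
    apply Submodule.sum_mem
    intro j hj
    rw [mem_range] at hj
    apply add_mem
    · exact Submodule.smul_mem _ _ (Submodule.subset_span
        ⟨2*j+1, Set.mem_Icc.mpr ⟨by omega, by omega⟩, rfl⟩)
    · exact Submodule.smul_mem _ _ (Submodule.subset_span
        ⟨2*j+2, Set.mem_Icc.mpr ⟨by omega, by omega⟩, rfl⟩)
  have hz_mem' : (∑ j ∈ range N,
      (α • xSeq N ε c a (2*j+1) + β • xSeq N ε c a (2*j+2)))
      ∈ (Submodule.span ℝ (xSeq N ε c a '' Set.Icc 1 (2 * N)) :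
        Set (EuclideanSpace ℝ (Fin (2 * N) ⊕ Fin (2 * N)))) := hz_mem
  have hd : dist (yVec N c) (∑ j ∈ range N,
      (α • xSeq N ε c a (2*j+1) + β • xSeq N ε c a (2*j+2))) = 1 / (ε * A) := by
    rw [dist_eq_norm, ← norm_neg, neg_sub, hnorm]
  refine le_trans ?_ (le_of_lt hlt)
  rw [← hd]
  exact Metric.infDist_le_dist_of_mem hz_mem'
end

section
/- Let 1 < p < ∞ with conjugate exponent q, let N ∈ ℕ, let (a_j)_{j=1}^N be positive reals with ∑_{j=1}^N (∑_{i=j}^N a_i^q)^{p/q} < ε^p, and let M < N. Then for any scalars (b_j)_{j=1}^{2N}, the vector y_{1,2} = ∑_{j=M+1}^N (∑_{i=0}^M b_{2i+1} a_{j-i}) e_{2j} (indices in a_• taken so that a_{j-i} appears with j−i ≥ 1) satisfies ‖y_{1,2}‖_p ≤ ε (∑_{j=1}^N |b_{2j-1}|^p)^{1/p}. -/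
open Finset

theorem stmt17 (p q ε : ℝ) (hp : 1 < p) (hq : 1 < q) (hpq : 1 / p + 1 / q = 1)
    (hε : 0 < ε) (N M : ℕ) (hMN : M < N)
    (a : ℕ → ℝ) (ha : ∀ j, 1 ≤ j → j ≤ N → 0 < a j)
    (htail : ∑ j ∈ Icc 1 N, (∑ i ∈ Icc j N, a i ^ q) ^ (p / q) < ε ^ p)
    (b : ℕ → ℝ) :
    (∑ j ∈ Icc (M + 1) N, |∑ i ∈ range (M + 1), b (2 * i + 1) * a (j - i)| ^ p) ^ (1 / p)
      ≤ ε * (∑ j ∈ Icc 1 N, |b (2 * j - 1)| ^ p) ^ (1 / p) := by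
  have hp0 : 0 < p := lt_trans one_pos hp
  have hq0 : 0 < q := lt_trans one_pos hq
  have hpq' : p.HolderConjugate q := Real.holderConjugate_iff.mpr ⟨hp, by rwa [← one_div, ← one_div]⟩
  set B : ℝ := ∑ j ∈ Icc 1 N, |b (2 * j - 1)| ^ p with hB
  have hBnn : 0 ≤ B := sum_nonneg fun j _ => Real.rpow_nonneg (abs_nonneg _) p
  -- the b-sum over range (M+1) is bounded by B
  have hbB : ∑ i ∈ range (M + 1), |b (2 * i + 1)| ^ p ≤ B := by
    have heq : ∑ i ∈ range (M + 1), |b (2 * i + 1)| ^ p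
        = ∑ j ∈ Icc 1 (M + 1), |b (2 * j - 1)| ^ p := by
      refine sum_nbij' (fun i => i + 1) (fun j => j - 1) ?_ ?_ ?_ ?_ ?_
      · intro i hi; simp only [mem_range] at hi; simp only [mem_Icc]; omega
      · intro j hj; simp only [mem_Icc] at hj; simp only [mem_range]; omega
      · intro i _; omega
      · intro j hj; simp only [mem_Icc] at hj; omega
      · intro i _; have h21 : 2 * (i + 1) - 1 = 2 * i + 1 := by omega
        rw [h21]
    rw [heq, hB]
    refine sum_le_sum_of_subset_of_nonneg (Icc_subset_Icc_right (by omega)) ?_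
    intro j _ _; exact Real.rpow_nonneg (abs_nonneg _) p
  -- pointwise Hölder bound
  have hpt : ∀ j ∈ Icc (M + 1) N,
      |∑ i ∈ range (M + 1), b (2 * i + 1) * a (j - i)| ^ p
        ≤ B * (∑ k ∈ Icc (j - M) N, a k ^ q) ^ (p / q) := by
    intro j hj
    simp only [mem_Icc] at hj
    have hak : ∀ k ∈ Icc (j - M) N, 0 ≤ a k ^ q := by
      intro k hk; simp only [mem_Icc] at hk
      exact Real.rpow_nonneg (le_of_lt (ha k (by omega) hk.2)) q
    -- reindex a-sum
    have haeq : ∑ i ∈ range (M + 1), a (j - i) ^ q = ∑ k ∈ Icc (j - M) j, a k ^ q := by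
      refine sum_nbij' (fun i => j - i) (fun k => j - k) ?_ ?_ ?_ ?_ ?_
      · intro i hi; simp only [mem_range] at hi; simp only [mem_Icc]; omega
      · intro k hk; simp only [mem_Icc] at hk; simp only [mem_range]; omega
      · intro i hi; simp only [mem_range] at hi; omega
      · intro k hk; simp only [mem_Icc] at hk; omega
      · intro i _; rfl
    have haq : ∑ i ∈ range (M + 1), a (j - i) ^ q ≤ ∑ k ∈ Icc (j - M) N, a k ^ q := by
      rw [haeq]
      refine sum_le_sum_of_subset_of_nonneg (Icc_subset_Icc_right hj.2) ?_
      intro k hk _; exact hak k hk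
    have haqnn : 0 ≤ ∑ i ∈ range (M + 1), a (j - i) ^ q := by
      refine sum_nonneg fun i hi => ?_
      simp only [mem_range] at hi
      exact Real.rpow_nonneg (le_of_lt (ha (j - i) (by omega) (by omega))) q
    -- Hölder
    have hH := Real.inner_le_Lp_mul_Lq (range (M + 1)) (fun i => b (2 * i + 1))
      (fun i => a (j - i)) hpq'
    have habs : ∀ i ∈ range (M + 1), |a (j - i)| = a (j - i) := by
      intro i hi; simp only [mem_range] at hi
      exact abs_of_pos (ha (j - i) (by omega) (by omega))
    have habs' : (∑ x ∈ range (M + 1), |a (j - x)| ^ q)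
        = ∑ x ∈ range (M + 1), a (j - x) ^ q :=
      sum_congr rfl fun i hi => by rw [habs i hi]
    rw [habs'] at hH
    have hH' : |∑ i ∈ range (M + 1), b (2 * i + 1) * a (j - i)|
        ≤ (∑ i ∈ range (M + 1), |b (2 * i + 1)| ^ p) ^ (1 / p)
          * (∑ i ∈ range (M + 1), a (j - i) ^ q) ^ (1 / q) := by
      rw [abs_le]
      constructor
      · have := Real.inner_le_Lp_mul_Lq (range (M + 1)) (fun i => -b (2 * i + 1))
          (fun i => a (j - i)) hpq'
        simp only [neg_mul, sum_neg_distrib, abs_neg] at this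
        rw [habs'] at this
        linarith
      · exact hH
    calc |∑ i ∈ range (M + 1), b (2 * i + 1) * a (j - i)| ^ p
        ≤ ((∑ i ∈ range (M + 1), |b (2 * i + 1)| ^ p) ^ (1 / p)
          * (∑ i ∈ range (M + 1), a (j - i) ^ q) ^ (1 / q)) ^ p := by
          exact Real.rpow_le_rpow (abs_nonneg _) hH' (le_of_lt hp0)
      _ = (∑ i ∈ range (M + 1), |b (2 * i + 1)| ^ p)
          * (∑ i ∈ range (M + 1), a (j - i) ^ q) ^ (p / q) := by
          rw [Real.mul_rpow (Real.rpow_nonneg (sum_nonneg fun i _ =>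
            Real.rpow_nonneg (abs_nonneg _) p) _) (Real.rpow_nonneg haqnn _),
            ← Real.rpow_mul (sum_nonneg fun i _ =>
            Real.rpow_nonneg (abs_nonneg _) p), ← Real.rpow_mul haqnn,
            one_div_mul_eq_div, one_div_mul_eq_div, div_self (ne_of_gt hp0),
            Real.rpow_one]
      _ ≤ B * (∑ k ∈ Icc (j - M) N, a k ^ q) ^ (p / q) := by
          refine mul_le_mul hbB (Real.rpow_le_rpow haqnn haq
            (le_of_lt (div_pos hp0 hq0))) (Real.rpow_nonneg haqnn _) hBnn
  -- sum up
  have htail' : ∑ j ∈ Icc (M + 1) N, (∑ k ∈ Icc (j - M) N, a k ^ q) ^ (p / q) ≤ ε ^ p := by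
    have heq : ∑ j ∈ Icc (M + 1) N, (∑ k ∈ Icc (j - M) N, a k ^ q) ^ (p / q)
        = ∑ j ∈ Icc 1 (N - M), (∑ k ∈ Icc j N, a k ^ q) ^ (p / q) := by
      refine sum_nbij' (fun j => j - M) (fun j => j + M) ?_ ?_ ?_ ?_ ?_
      · intro j hj; simp only [mem_Icc] at hj ⊢; omega
      · intro j hj; simp only [mem_Icc] at hj ⊢; omega
      · intro j hj; simp only [mem_Icc] at hj; omega
      · intro j _; omega
      · intro j _; rfl
    rw [heq]
    refine le_trans ?_ (le_of_lt htail)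
    refine sum_le_sum_of_subset_of_nonneg (Icc_subset_Icc_right (by omega)) ?_
    intro j hj _
    simp only [mem_Icc] at hj
    refine Real.rpow_nonneg (sum_nonneg fun k hk => ?_) _
    simp only [mem_Icc] at hk
    exact Real.rpow_nonneg (le_of_lt (ha k (by omega) hk.2)) q
  have hS : ∑ j ∈ Icc (M + 1) N, |∑ i ∈ range (M + 1), b (2 * i + 1) * a (j - i)| ^ p
      ≤ ε ^ p * B := by
    calc ∑ j ∈ Icc (M + 1) N, |∑ i ∈ range (M + 1), b (2 * i + 1) * a (j - i)| ^ p
        ≤ ∑ j ∈ Icc (M + 1) N, B * (∑ k ∈ Icc (j - M) N, a k ^ q) ^ (p / q) :=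
          sum_le_sum hpt
      _ = B * ∑ j ∈ Icc (M + 1) N, (∑ k ∈ Icc (j - M) N, a k ^ q) ^ (p / q) := by
          rw [mul_sum]
      _ ≤ B * ε ^ p := by
          refine mul_le_mul_of_nonneg_left htail' hBnn
      _ = ε ^ p * B := mul_comm _ _
  calc (∑ j ∈ Icc (M + 1) N, |∑ i ∈ range (M + 1), b (2 * i + 1) * a (j - i)| ^ p) ^ (1 / p)
      ≤ (ε ^ p * B) ^ (1 / p) := by
        refine Real.rpow_le_rpow (sum_nonneg fun j _ => Real.rpow_nonneg (abs_nonneg _) _)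
          hS (by positivity)
    _ = ε * B ^ (1 / p) := by
        rw [Real.mul_rpow (Real.rpow_nonneg (le_of_lt hε) _) hBnn,
          ← Real.rpow_mul (le_of_lt hε), mul_one_div, div_self (ne_of_gt hp0), Real.rpow_one]
end
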